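/- Let D ∈ ℝ^{n×n} be symmetric with smallest eigenvalue λ_min, and let v ∈ ℝⁿ with v ≠ 0. Then the function μ ↦ ‖(D + μ·I)^{−1} v‖² is strictly decreasing on the interval (−λ_min, ∞); in particular, there is at most one μ₀ > −λ_min with ‖(D + μ₀·I)^{−1} v‖ = 1. -/

import Mathlib

open Matrix

/-- The Euclidean norm on `ℝⁿ`. -/
noncomputable def euclNorm {n : ℕ} (x : Fin n → ℝ) : ℝ := Real.sqrt (∑ i, x i ^ 2)

/-- Let `D` be symmetric with smallest eigenvalue `λ_min` (characterized as the minimum of the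
Rayleigh quotient over the unit sphere, attained), and `v ≠ 0`. Then
`μ ↦ ‖(D + μI)⁻¹ v‖²` is strictly decreasing on `(−λ_min, ∞)`; in particular there is at most
one `μ₀ > −λ_min` with `‖(D + μ₀ I)⁻¹ v‖ = 1`. -/
theorem inv_shift_norm_strictAnti (n : ℕ) (D : Matrix (Fin n) (Fin n) ℝ) (hD : D.IsSymm)
    (v : Fin n → ℝ) (hv : v ≠ 0) (lammin : ℝ)
    (hlo : ∀ x : Fin n → ℝ, euclNorm x = 1 → lammin ≤ x ⬝ᵥ D.mulVec x)
    (hach : ∃ x : Fin n → ℝ, euclNorm x = 1 ∧ x ⬝ᵥ D.mulVec x = lammin) :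
    StrictAntiOn
      (fun μ : ℝ =>
        (euclNorm (((D + μ • (1 : Matrix (Fin n) (Fin n) ℝ))⁻¹).mulVec v)) ^ 2)
      (Set.Ioi (-lammin)) ∧
    ∀ μ₁ ∈ Set.Ioi (-lammin), ∀ μ₂ ∈ Set.Ioi (-lammin),
      euclNorm (((D + μ₁ • (1 : Matrix (Fin n) (Fin n) ℝ))⁻¹).mulVec v) = 1 →
      euclNorm (((D + μ₂ • (1 : Matrix (Fin n) (Fin n) ℝ))⁻¹).mulVec v) = 1 →
      μ₁ = μ₂ := by
  -- squared euclidean norm equals dot product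
  have hsq : ∀ x : Fin n → ℝ, euclNorm x ^ 2 = x ⬝ᵥ x := by
    intro x
    have h : x ⬝ᵥ x = ∑ i, x i ^ 2 := by simp [dotProduct, sq]
    rw [euclNorm, h, Real.sq_sqrt (by positivity)]
  -- Rayleigh bound for general vectors
  have hray : ∀ x : Fin n → ℝ, lammin * (x ⬝ᵥ x) ≤ x ⬝ᵥ D.mulVec x := by
    intro x
    rcases eq_or_ne x 0 with rfl | hx
    · simp
    · have hxx : 0 < x ⬝ᵥ x := by
        rcases lt_or_eq_of_le (Finset.sum_nonneg (fun i _ => mul_self_nonneg (x i)) :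
            (0:ℝ) ≤ x ⬝ᵥ x) with h | h
        · exact h
        · exact absurd (dotProduct_self_eq_zero.mp h.symm) hx
      set c : ℝ := Real.sqrt (x ⬝ᵥ x) with hc
      have hc0 : 0 < c := Real.sqrt_pos.mpr hxx
      have hcsq : c ^ 2 = x ⬝ᵥ x := Real.sq_sqrt hxx.le
      have hu : euclNorm (c⁻¹ • x) = 1 := by
        have : ∑ i, (c⁻¹ • x) i ^ 2 = c⁻¹ ^ 2 * ∑ i, x i ^ 2 := by
          simp [Finset.mul_sum, mul_pow]
        rw [euclNorm, this]
        have hx2 : ∑ i, x i ^ 2 = x ⬝ᵥ x := by simp [dotProduct, sq]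
        rw [hx2, ← hcsq]
        rw [show c⁻¹ ^ 2 * c ^ 2 = 1 by field_simp, Real.sqrt_one]
      have := hlo _ hu
      have hexp : (c⁻¹ • x) ⬝ᵥ D.mulVec (c⁻¹ • x) = c⁻¹ ^ 2 * (x ⬝ᵥ D.mulVec x) := by
        rw [Matrix.mulVec_smul, smul_dotProduct, dotProduct_smul]
        simp [sq]; ring
      rw [hexp] at this
      have h2 : lammin * c ^ 2 ≤ c⁻¹ ^ 2 * (x ⬝ᵥ D.mulVec x) * c ^ 2 :=
        mul_le_mul_of_nonneg_right this (by positivity)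
      calc lammin * (x ⬝ᵥ x) = lammin * c ^ 2 := by rw [hcsq]
        _ ≤ c⁻¹ ^ 2 * (x ⬝ᵥ D.mulVec x) * c ^ 2 := h2
        _ = x ⬝ᵥ D.mulVec x := by field_simp
  -- positive definiteness of the shifted matrices
  have hherm : D.IsHermitian := by
    rw [Matrix.IsHermitian]; ext i j
    simp [Matrix.conjTranspose_apply, hD.apply]
  have hpd : ∀ μ : ℝ, -lammin < μ → (D + μ • (1 : Matrix (Fin n) (Fin n) ℝ)).PosDef := by
    intro μ hμ
    rw [Matrix.posDef_iff_dotProduct_mulVec]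
    constructor
    · rw [Matrix.IsHermitian]; ext i j
      simp [Matrix.conjTranspose_apply, Matrix.add_apply, Matrix.smul_apply,
        Matrix.one_apply, hD.apply]
      rcases eq_or_ne i j with rfl | hij
      · rfl
      · simp [hij, Ne.symm hij]
    · intro x hx
      have hxx : 0 < x ⬝ᵥ x := by
        rcases lt_or_eq_of_le (Finset.sum_nonneg (fun i _ => mul_self_nonneg (x i)) :
            (0:ℝ) ≤ x ⬝ᵥ x) with h | h
        · exact h
        · exact absurd (dotProduct_self_eq_zero.mp h.symm) hx
      have : x ⬝ᵥ (D + μ • 1).mulVec x = x ⬝ᵥ D.mulVec x + μ * (x ⬝ᵥ x) := by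
        rw [Matrix.add_mulVec, dotProduct_add, Matrix.smul_mulVec,
          Matrix.one_mulVec, dotProduct_smul]
        simp [smul_eq_mul]
      have := hray x
      simp only [star_trivial]
      calc (0:ℝ) < (lammin + μ) * (x ⬝ᵥ x) := by nlinarith
        _ ≤ x ⬝ᵥ D.mulVec x + μ * (x ⬝ᵥ x) := by nlinarith
        _ = x ⬝ᵥ (D + μ • 1).mulVec x := by
            rw [Matrix.add_mulVec, dotProduct_add, Matrix.smul_mulVec,
              Matrix.one_mulVec, dotProduct_smul]; simp [smul_eq_mul]
  -- key strict inequality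
  have key : StrictAntiOn
      (fun μ : ℝ =>
        (euclNorm (((D + μ • (1 : Matrix (Fin n) (Fin n) ℝ))⁻¹).mulVec v)) ^ 2)
      (Set.Ioi (-lammin)) := by
    intro μ₁ hμ₁ μ₂ hμ₂ hlt
    simp only [Set.mem_Ioi] at hμ₁ hμ₂
    set A := D + μ₁ • (1 : Matrix (Fin n) (Fin n) ℝ) with hA
    set B := D + μ₂ • (1 : Matrix (Fin n) (Fin n) ℝ) with hB
    have hApd := hpd μ₁ hμ₁
    have hBpd := hpd μ₂ hμ₂
    set x₁ := A⁻¹.mulVec v with hx₁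
    set x₂ := B⁻¹.mulVec v with hx₂
    have hAx₁ : A.mulVec x₁ = v := by
      rw [hx₁, Matrix.mulVec_mulVec, Matrix.mul_nonsing_inv _ hApd.det_pos.ne'.isUnit, Matrix.one_mulVec]
    have hBx₂ : B.mulVec x₂ = v := by
      rw [hx₂, Matrix.mulVec_mulVec, Matrix.mul_nonsing_inv _ hBpd.det_pos.ne'.isUnit,
        Matrix.one_mulVec]
    have hx₂ne : x₂ ≠ 0 := by
      intro h
      apply hv
      rw [← hBx₂, h, Matrix.mulVec_zero]
    set δ := μ₂ - μ₁ with hδdef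
    have hδ : 0 < δ := sub_pos.mpr hlt
    have hBA : A.mulVec x₂ + δ • x₂ = v := by
      rw [← hBx₂, hA, hB, Matrix.add_mulVec, Matrix.add_mulVec,
        Matrix.smul_mulVec, Matrix.smul_mulVec, Matrix.one_mulVec]
      rw [hδdef, sub_smul]
      abel
    set y := A⁻¹.mulVec x₂ with hy
    have hx1eq : x₁ = x₂ + δ • y := by
      rw [hx₁, ← hBA, Matrix.mulVec_add, Matrix.mulVec_mulVec,
        Matrix.nonsing_inv_mul _ hApd.det_pos.ne'.isUnit, Matrix.one_mulVec,
        Matrix.mulVec_smul]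
    have hypos : 0 < x₂ ⬝ᵥ y := by
      have := hApd.inv.dotProduct_mulVec_pos hx₂ne
      simpa using this
    have hyy : 0 ≤ y ⬝ᵥ y :=
      Finset.sum_nonneg fun i _ => mul_self_nonneg (y i)
    have expand : x₁ ⬝ᵥ x₁ = x₂ ⬝ᵥ x₂ + 2 * δ * (x₂ ⬝ᵥ y) + δ ^ 2 * (y ⬝ᵥ y) := by
      rw [hx1eq]
      rw [dotProduct_add, add_dotProduct, add_dotProduct, dotProduct_smul,
        smul_dotProduct, smul_dotProduct, dotProduct_smul,
        dotProduct_comm y x₂]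
      simp only [smul_eq_mul]
      ring
    dsimp only
    rw [hsq, hsq]
    show x₂ ⬝ᵥ x₂ < x₁ ⬝ᵥ x₁
    nlinarith
  refine ⟨key, ?_⟩
  intro μ₁ hμ₁ μ₂ hμ₂ h₁ h₂
  exact key.injOn hμ₁ hμ₂ (by simp [h₁, h₂])
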